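/- arXiv:2303.11433 — 3 statements merged into one kernel-verified Lean document; each statement's English description precedes it below -/
import Mathlib

section
/- If m_j ≥ 0 for all j = 1,...,J and the scheme update is m_j' = (1 − (Δt/Δx)A_j − Δt(d_j + a_j) − Δt·Σ_{i=1}^J κ_{i,j} m_i)·m_j + (Δt/Δx)(A_j − B_j)·m_{j−1} + Δt·Σ_{i=j}^J b_{i,j} a_i m_i + (Δt/2)·Σ_{i=1}^{j−1} κ_{i,j−i} m_i m_{j−i}, where all coefficients a_i, d_j, κ_{i,j}, b_{i,j} are nonnegative, A_j − B_j ≥ 0, and (Δt/Δx)A_j + Δt(d_j + a_j) + Δt·Σ_{i=1}^J κ_{i,j} m_i ≤ 1 for each j, then m_j' ≥ 0 for all j. -/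
open Finset

theorem explicit_scheme_positivity (J : ℕ) (Δt Δx : ℝ)
    (hΔt : 0 ≤ Δt) (hΔx : 0 < Δx)
    (m m' a d A B : ℕ → ℝ) (κ b : ℕ → ℕ → ℝ)
    (hm : ∀ j, j ≤ J → 0 ≤ m j)
    (ha : ∀ i, 0 ≤ a i) (hd : ∀ j, 0 ≤ d j)
    (hκ : ∀ i j, 0 ≤ κ i j) (hb : ∀ i j, 0 ≤ b i j)
    (hAB : ∀ j ∈ Icc 1 J, 0 ≤ A j - B j)
    (hCFL : ∀ j ∈ Icc 1 J,
      Δt / Δx * A j + Δt * (d j + a j) + Δt * ∑ i ∈ Icc 1 J, κ i j * m i ≤ 1)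
    (hupd : ∀ j ∈ Icc 1 J,
      m' j = (1 - Δt / Δx * A j - Δt * (d j + a j)
                - Δt * ∑ i ∈ Icc 1 J, κ i j * m i) * m j
             + Δt / Δx * (A j - B j) * m (j - 1)
             + Δt * ∑ i ∈ Icc j J, b i j * a i * m i
             + Δt / 2 * ∑ i ∈ Icc 1 (j - 1), κ i (j - i) * m i * m (j - i)) :
    ∀ j ∈ Icc 1 J, 0 ≤ m' j := by
  intro j hj
  rw [hupd j hj]
  rw [mem_Icc] at hj
  obtain ⟨hj1, hjJ⟩ := hj
  have h1 : 0 ≤ (1 - Δt / Δx * A j - Δt * (d j + a j)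
      - Δt * ∑ i ∈ Icc 1 J, κ i j * m i) * m j := by
    apply mul_nonneg _ (hm j hjJ)
    have := hCFL j (mem_Icc.mpr ⟨hj1, hjJ⟩)
    linarith
  have h2 : 0 ≤ Δt / Δx * (A j - B j) * m (j - 1) := by
    apply mul_nonneg (mul_nonneg (div_nonneg hΔt hΔx.le)
      (hAB j (mem_Icc.mpr ⟨hj1, hjJ⟩)))
    exact hm _ (le_trans (Nat.sub_le j 1) hjJ)
  have h3 : 0 ≤ Δt * ∑ i ∈ Icc j J, b i j * a i * m i := by
    apply mul_nonneg hΔt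
    apply Finset.sum_nonneg
    intro i hi
    rw [mem_Icc] at hi
    exact mul_nonneg (mul_nonneg (hb i j) (ha i)) (hm i hi.2)
  have h4 : 0 ≤ Δt / 2 * ∑ i ∈ Icc 1 (j - 1), κ i (j - i) * m i * m (j - i) := by
    apply mul_nonneg (by linarith)
    apply Finset.sum_nonneg
    intro i hi
    rw [mem_Icc] at hi
    exact mul_nonneg (mul_nonneg (hκ i (j - i))
      (hm i (le_trans (le_trans hi.2 (Nat.sub_le j 1)) hjJ)))
      (hm (j - i) (le_trans (Nat.sub_le j i) hjJ))
  linarith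
end

section
/- Let κ : ℕ × ℕ → ℝ be symmetric and nonnegative with κ_{i,j} = 0 whenever i + j > J, and let m : {1,...,J} → ℝ≥0. Then the explicit coagulation terms conserve mass: Σ_{j=1}^J x_j·C_j = 0, where x_j = j·Δx and C_j = (1/2)·Σ_{i=1}^{j−1} κ_{i,j−i} m_i m_{j−i} − Σ_{i=1}^J κ_{i,j} m_i m_j. -/
open Finset

private lemma coag_reindex (J : ℕ) (g : ℕ × ℕ → ℝ) :
    ∑ j ∈ Icc 1 J, ∑ i ∈ Icc 1 (j - 1), g (i, j - i)
      = ∑ p ∈ (Icc 1 J ×ˢ Icc 1 J).filter (fun p => p.1 + p.2 ≤ J), g p := by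
  rw [Finset.sum_sigma']
  refine Finset.sum_nbij' (fun p => (p.2, p.1 - p.2))
    (fun p => (⟨p.1 + p.2, p.1⟩ : Σ _ : ℕ, ℕ)) ?_ ?_ ?_ ?_ ?_ <;>
    rintro ⟨x, y⟩ ha <;>
    dsimp only <;>
    simp only [mem_sigma, mem_Icc, mem_filter, mem_product, Sigma.mk.inj_iff,
      Prod.mk.injEq, heq_eq_eq, true_and, and_true] at * <;>
    try omega

theorem coagulation_mass_conservation (J : ℕ) (Δx : ℝ) (κ : ℕ → ℕ → ℝ) (m : ℕ → ℝ)
    (hκsymm : ∀ i j, κ i j = κ j i) (hκ : ∀ i j, 0 ≤ κ i j)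
    (hκ0 : ∀ i j, J < i + j → κ i j = 0)
    (hm : ∀ j, 0 ≤ m j) :
    ∑ j ∈ Icc 1 J, (j : ℝ) * Δx *
        ((1 / 2) * ∑ i ∈ Icc 1 (j - 1), κ i (j - i) * m i * m (j - i)
          - ∑ i ∈ Icc 1 J, κ i j * m i * m j) = 0 := by
  set T := (Icc 1 J ×ˢ Icc 1 J).filter (fun p : ℕ × ℕ => p.1 + p.2 ≤ J) with hT
  set A : ℝ := ∑ j ∈ Icc 1 J, (j : ℝ) * ∑ i ∈ Icc 1 (j - 1), κ i (j - i) * m i * m (j - i)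
    with hA
  set B : ℝ := ∑ j ∈ Icc 1 J, (j : ℝ) * ∑ i ∈ Icc 1 J, κ i j * m i * m j with hB
  have hA' : A = ∑ p ∈ T, ((p.1 + p.2 : ℕ) : ℝ) * (κ p.1 p.2 * m p.1 * m p.2) := by
    rw [hA, ← coag_reindex J (fun p => ((p.1 + p.2 : ℕ) : ℝ) * (κ p.1 p.2 * m p.1 * m p.2))]
    refine Finset.sum_congr rfl fun j hj => ?_
    rw [Finset.mul_sum]
    refine Finset.sum_congr rfl fun i hi => ?_
    simp only [mem_Icc] at hi hj
    have : i + (j - i) = j := by omega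
    rw [this]
  have hB' : B = ∑ p ∈ T, ((p.2 : ℕ) : ℝ) * (κ p.1 p.2 * m p.1 * m p.2) := by
    rw [hB]
    rw [show (∑ j ∈ Icc 1 J, (j : ℝ) * ∑ i ∈ Icc 1 J, κ i j * m i * m j)
        = ∑ j ∈ Icc 1 J, ∑ i ∈ Icc 1 J, (j : ℝ) * (κ i j * m i * m j) from
      Finset.sum_congr rfl fun j _ => by rw [Finset.mul_sum]]
    rw [Finset.sum_comm, ← Finset.sum_product', hT]
    refine (Finset.sum_filter_of_ne ?_).symm
    intro p hp hne
    by_contra h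
    push_neg at h
    exact hne (by rw [hκ0 p.1 p.2 h]; ring)
  have hswap : ∑ p ∈ T, ((p.1 : ℕ) : ℝ) * (κ p.1 p.2 * m p.1 * m p.2)
      = ∑ p ∈ T, ((p.2 : ℕ) : ℝ) * (κ p.1 p.2 * m p.1 * m p.2) := by
    refine Finset.sum_nbij' (fun p => (p.2, p.1)) (fun p => (p.2, p.1)) ?_ ?_ ?_ ?_ ?_ <;>
      intro p hp <;>
      simp only [hT, mem_filter, mem_product, mem_Icc] at * <;> try omega
    · rw [hκsymm]; ring
  have key : A = 2 * B := by
    rw [hA', hB']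
    have : ∀ p ∈ T, ((p.1 + p.2 : ℕ) : ℝ) * (κ p.1 p.2 * m p.1 * m p.2)
        = ((p.1 : ℕ) : ℝ) * (κ p.1 p.2 * m p.1 * m p.2)
          + ((p.2 : ℕ) : ℝ) * (κ p.1 p.2 * m p.1 * m p.2) := by
      intro p _; push_cast; ring
    rw [Finset.sum_congr rfl this, Finset.sum_add_distrib, hswap]; ring
  have : ∑ j ∈ Icc 1 J, (j : ℝ) * Δx *
        ((1 / 2) * ∑ i ∈ Icc 1 (j - 1), κ i (j - i) * m i * m (j - i)
          - ∑ i ∈ Icc 1 J, κ i j * m i * m j)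
      = Δx * ((1 / 2) * A - B) := by
    rw [hA, hB, Finset.mul_sum, ← Finset.sum_sub_distrib, Finset.mul_sum]
    exact Finset.sum_congr rfl fun j _ => by ring
  rw [this, key]; ring
end

section
/- For the semi-implicit scheme, under the CFL condition ζ̄·(2 + 3/(2Δx))·Δt ≤ 1 with ζ̄ = max{ζ, ‖a‖_{W^{1,∞}}}, the diagonal of the linear system (1 + Δt·Σ_{i=1}^J κ_{i,j} m_i^k)·m_j^{k+1} = (1 − (Δt/Δx)A_j^k − Δt(d_j^k + a_j))·m_j^k + (Δt/Δx)(A_j^k − B_j^k)·m_{j−1}^k + Δt·Σ_{i=j}^J b_{i,j} a_i m_i^k + (Δt/2)·Σ_{i=1}^{j−1} κ_{i,j−i} m_i^{k+1} m_{j−i}^k is strictly positive, and the right-hand-side coefficients of m_j^k and m_{j−1}^k are nonnegative whenever m_i^k ≥ 0 for all i; consequently, solving for m_j^{k+1} in increasing order of j (forward substitution, since the gain term only involves m_i^{k+1} with i < j) yields m_j^{k+1} ≥ 0 for all j. -/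
open Finset

theorem semi_implicit_scheme_positivity (J : ℕ) (Δt Δx ζ ζbar : ℝ)
    (hΔt : 0 < Δt) (hΔx : 0 < Δx) (hζ : 0 ≤ ζ) (hζbar : ζ ≤ ζbar)
    (hCFL : ζbar * (2 + 3 / (2 * Δx)) * Δt ≤ 1)
    (A B d a mk m' : ℕ → ℝ) (κ b : ℕ → ℕ → ℝ)
    (hA : ∀ j, |A j| ≤ (3 / 2) * ζ)
    (hAB : ∀ j, 0 ≤ A j - B j)
    (hd : ∀ j, 0 ≤ d j ∧ d j ≤ ζ)
    (ha : ∀ j, 0 ≤ a j ∧ a j ≤ ζbar)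
    (hκ : ∀ i j, 0 ≤ κ i j) (hb : ∀ i j, 0 ≤ b i j)
    (hmk : ∀ j, 0 ≤ mk j)
    (hupd : ∀ j ∈ Icc 1 J,
      (1 + Δt * ∑ i ∈ Icc 1 J, κ i j * mk i) * m' j =
        (1 - Δt / Δx * A j - Δt * (d j + a j)) * mk j
        + Δt / Δx * (A j - B j) * mk (j - 1)
        + Δt * ∑ i ∈ Icc j J, b i j * a i * mk i
        + Δt / 2 * ∑ i ∈ Icc 1 (j - 1), κ i (j - i) * m' i * mk (j - i)) :
    (∀ j ∈ Icc 1 J, 0 < 1 + Δt * ∑ i ∈ Icc 1 J, κ i j * mk i) ∧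
    (∀ j ∈ Icc 1 J,
        0 ≤ 1 - Δt / Δx * A j - Δt * (d j + a j) ∧ 0 ≤ Δt / Δx * (A j - B j)) ∧
    ∀ j ∈ Icc 1 J, 0 ≤ m' j := by
  have hζbar0 : 0 ≤ ζbar := le_trans hζ hζbar
  have hdiag : ∀ j, 0 < 1 + Δt * ∑ i ∈ Icc 1 J, κ i j * mk i := by
    intro j
    have h : 0 ≤ ∑ i ∈ Icc 1 J, κ i j * mk i :=
      Finset.sum_nonneg fun i _ => mul_nonneg (hκ i j) (hmk i)
    nlinarith
  have hcoef : ∀ j, 0 ≤ 1 - Δt / Δx * A j - Δt * (d j + a j) := by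
    intro j
    have h1 : A j ≤ (3/2) * ζbar := le_trans (le_trans (le_abs_self _) (hA j)) (by linarith)
    have h2 : d j + a j ≤ 2 * ζbar := by
      have := (hd j).2; have := (ha j).2; linarith
    have h3 : Δt / Δx * A j ≤ Δt / Δx * ((3/2) * ζbar) :=
      mul_le_mul_of_nonneg_left h1 (by positivity)
    have h4 : Δt * (d j + a j) ≤ Δt * (2 * ζbar) := mul_le_mul_of_nonneg_left h2 hΔt.le
    have h5 : Δt / Δx * ((3/2) * ζbar) + Δt * (2 * ζbar) = ζbar * (2 + 3 / (2 * Δx)) * Δt := by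
      field_simp; ring
    linarith
  refine ⟨fun j _ => hdiag j,
    fun j _ => ⟨hcoef j, mul_nonneg (by positivity) (hAB j)⟩, ?_⟩
  intro j hj
  induction j using Nat.strong_induction_on with
  | _ j ih =>
    obtain ⟨hj1, hjJ⟩ := Finset.mem_Icc.mp hj
    have hrhs : 0 ≤ (1 + Δt * ∑ i ∈ Icc 1 J, κ i j * mk i) * m' j := by
      rw [hupd j hj]
      have t1 : 0 ≤ (1 - Δt / Δx * A j - Δt * (d j + a j)) * mk j :=
        mul_nonneg (hcoef j) (hmk j)
      have t2 : 0 ≤ Δt / Δx * (A j - B j) * mk (j - 1) :=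
        mul_nonneg (mul_nonneg (by positivity) (hAB j)) (hmk _)
      have t3 : 0 ≤ Δt * ∑ i ∈ Icc j J, b i j * a i * mk i :=
        mul_nonneg hΔt.le (Finset.sum_nonneg fun i _ =>
          mul_nonneg (mul_nonneg (hb i j) (ha i).1) (hmk i))
      have t4 : 0 ≤ Δt / 2 * ∑ i ∈ Icc 1 (j - 1), κ i (j - i) * m' i * mk (j - i) := by
        apply mul_nonneg (by positivity)
        apply Finset.sum_nonneg
        intro i hi
        obtain ⟨hi1, hi2⟩ := Finset.mem_Icc.mp hi
        have hilt : i < j := by omega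
        have hiJ : i ∈ Icc 1 J := Finset.mem_Icc.mpr ⟨hi1, by omega⟩
        exact mul_nonneg (mul_nonneg (hκ _ _) (ih i hilt hiJ)) (hmk _)
      linarith
    exact nonneg_of_mul_nonneg_right hrhs (hdiag j)
end
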